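/- Let $K$ be a number field, $F \in \mathcal{O}_K[x,y]$ a binary cubic with $v_{\mathfrak{q}}(\Delta_F)=1$ for a prime $\mathfrak{q} \nmid 2\alpha_0$ (where $\alpha_0$ is the leading coefficient), and suppose $F \equiv \alpha_0(x-ay)^2(x-by) \pmod{\mathfrak{q}}$ with $a \not\equiv b \pmod{\mathfrak{q}}$. Suppose $x_0, y_0, z_0 \in \mathcal{O}_K$ satisfy $F(x_0,y_0) = z_0^l$ for a prime $l$ with $\mathfrak{q} \nmid z_0$. Then $\mathfrak{q} \nmid H(x_0,y_0)$ and the $j$-invariant of the Frey curve satisfies $v_{\mathfrak{q}}(j(x_0,y_0)) = -1$; in particular the Frey curve has potentially multiplicative reduction at $\mathfrak{q}$. -/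

import Mathlib

open MvPolynomial NumberField IsDedekindDomain

set_option maxHeartbeats 2000000 in
set_option synthInstance.maxHeartbeats 400000 in
/-- Let `K` be a number field and `F(x,y) = α₀x³ + α₁x²y + α₂xy² + α₃y³ ∈ 𝓞 K[x,y]` a
binary cubic with `v_𝔮(Δ_F) = 1` for a prime `𝔮 ∤ 2α₀`, and suppose
`F ≡ α₀(x-ay)²(x-by) (mod 𝔮)` with `a ≢ b (mod 𝔮)`. Suppose `x₀, y₀, z₀ ∈ 𝓞 K` satisfy
`F(x₀,y₀) = z₀^l` for a prime `l` with `𝔮 ∤ z₀`. Then `𝔮 ∤ H(x₀,y₀)` (where `H` is the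
Hessian of `F`) and the `j`-invariant `j = -2⁸H(x₀,y₀)³/(Δ_F·F(x₀,y₀)²)` of the Frey
curve satisfies `v_𝔮(j) = -1` (i.e. `𝔮`-adic valuation `ofAdd 1` multiplicatively); in
particular `v_𝔮(j) < 0`, so the Frey curve has potentially multiplicative reduction
at `𝔮`. -/
theorem frey_curve_pot_mult_reduction (K : Type*) [Field K] [NumberField K]
    (α₀ α₁ α₂ α₃ : 𝓞 K)
    (F : MvPolynomial (Fin 2) (𝓞 K))
    (hF : F = C α₀ * X 0 ^ 3 + C α₁ * X 0 ^ 2 * X 1 + C α₂ * X 0 * X 1 ^ 2 + C α₃ * X 1 ^ 3)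
    (Δ : 𝓞 K)
    (hΔ : Δ = 18 * α₀ * α₁ * α₂ * α₃ + (α₁ * α₂) ^ 2 - 27 * (α₀ * α₃) ^ 2
      - 4 * α₀ * α₂ ^ 3 - 4 * α₁ ^ 3 * α₃)
    (H : MvPolynomial (Fin 2) (𝓞 K))
    (hH : C 4 * H = pderiv 0 (pderiv 0 F) * pderiv 1 (pderiv 1 F) - pderiv 1 (pderiv 0 F) ^ 2)
    (𝔮 : HeightOneSpectrum (𝓞 K))
    -- `v_𝔮(Δ_F) = 1`
    (hΔ𝔮 : 𝔮.intValuation Δ = Multiplicative.ofAdd (-1 : ℤ))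
    (h2α₀ : 2 * α₀ ∉ 𝔮.asIdeal)
    (a b : 𝓞 K)
    (hcong : ∀ x y : 𝓞 K,
      MvPolynomial.eval ![x, y] F - α₀ * (x - a * y) ^ 2 * (x - b * y) ∈ 𝔮.asIdeal)
    (hab : a - b ∉ 𝔮.asIdeal)
    (l : ℕ) (hl : l.Prime)
    (x₀ y₀ z₀ : 𝓞 K)
    (hsol : MvPolynomial.eval ![x₀, y₀] F = z₀ ^ l)
    (hz₀ : z₀ ∉ 𝔮.asIdeal)
    (j : K)
    (hj : j = algebraMap (𝓞 K) K (-2 ^ 8 * MvPolynomial.eval ![x₀, y₀] H ^ 3) /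
      algebraMap (𝓞 K) K (Δ * MvPolynomial.eval ![x₀, y₀] F ^ 2)) :
    MvPolynomial.eval ![x₀, y₀] H ∉ 𝔮.asIdeal ∧
      𝔮.valuation K j = Multiplicative.ofAdd (1 : ℤ) ∧
      (1 : WithZero (Multiplicative ℤ)) < 𝔮.valuation K j := by
  classical
  have hqp : 𝔮.asIdeal.IsPrime := 𝔮.isPrime
  have h2 : (2 : 𝓞 K) ∉ 𝔮.asIdeal := fun h => h2α₀ (Ideal.mul_mem_right _ _ h)
  have hα₀ : α₀ ∉ 𝔮.asIdeal := fun h => h2α₀ (Ideal.mul_mem_left _ _ h)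
  -- Hessian evaluation
  have p3 : ∀ i : Fin 2, pderiv i (3 : MvPolynomial (Fin 2) (𝓞 K)) = 0 := by
    intro i
    have h : (3 : MvPolynomial (Fin 2) (𝓞 K)) = C 3 := (map_ofNat C 3).symm
    rw [h, pderiv_C]
  have p2 : ∀ i : Fin 2, pderiv i (2 : MvPolynomial (Fin 2) (𝓞 K)) = 0 := by
    intro i
    have h : (2 : MvPolynomial (Fin 2) (𝓞 K)) = C 2 := (map_ofNat C 2).symm
    rw [h, pderiv_C]
  have hev : 4 * eval ![x₀, y₀] H = (12*α₀*α₂ - 4*α₁^2) * x₀^2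
      + (36*α₀*α₃ - 4*α₁*α₂) * x₀*y₀ + (12*α₁*α₃ - 4*α₂^2) * y₀^2 := by
    have hev := congrArg (eval ![x₀, y₀]) hH
    rw [hF] at hev
    simp [pderiv_mul, Derivation.leibniz_pow, p3, p2] at hev
    rw [hev]; ring
  have hevF : ∀ x y : 𝓞 K, eval ![x, y] F = α₀*x^3 + α₁*x^2*y + α₂*x*y^2 + α₃*y^3 := by
    intro x y; rw [hF]; simp
  -- pass to the residue field
  set I := 𝔮.asIdeal with hI
  let π : 𝓞 K →+* (𝓞 K ⧸ I) := Ideal.Quotient.mk I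
  have hz : ∀ x : 𝓞 K, x ∈ I ↔ π x = 0 := fun x => (Ideal.Quotient.eq_zero_iff_mem).symm
  have h2R : π 2 ≠ 0 := fun h => h2 ((hz 2).mpr h)
  have hA0 : π α₀ ≠ 0 := fun h => hα₀ ((hz α₀).mpr h)
  have hAB : π a - π b ≠ 0 := by
    intro h; exact hab ((hz _).mpr (by rw [map_sub]; exact h))
  have hzR : π z₀ ≠ 0 := fun h => hz₀ ((hz z₀).mpr h)
  -- the solution congruence
  have hsolR : ∀ x y : 𝓞 K,
      π (eval ![x, y] F) = π α₀ * (π x - π a * π y) ^ 2 * (π x - π b * π y) := by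
    intro x y
    have h := (hz _).mp (hcong x y)
    rw [map_sub] at h
    rw [sub_eq_zero.mp h]
    push_cast [map_mul, map_sub, map_pow]
    ring
  have hX : π x₀ - π a * π y₀ ≠ 0 := by
    intro h0
    have h := hsolR x₀ y₀
    rw [hsol, map_pow] at h
    have h1 : π z₀ ^ l = 0 := by rw [h, h0]; ring
    exact hzR (pow_eq_zero_iff hl.pos.ne' |>.mp h1)
  -- coefficientwise congruences
  have q01 : π α₃ + π α₀ * (π a ^ 2 * π b) = 0 := by
    have h := (hz _).mp (hcong 0 1)
    rw [hevF] at h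
    rw [map_sub] at h
    push_cast [map_add, map_mul, map_pow, map_sub, map_zero, map_one] at h
    linear_combination h
  have q11 : π α₀ + π α₁ + π α₂ + π α₃ - π α₀ * (1 - π a) ^ 2 * (1 - π b) = 0 := by
    have h := (hz _).mp (hcong 1 1)
    rw [hevF] at h
    rw [map_sub] at h
    push_cast [map_add, map_mul, map_pow, map_sub, map_one] at h
    linear_combination h
  have qm1 : -π α₀ + π α₁ - π α₂ + π α₃ - π α₀ * (-1 - π a) ^ 2 * (-1 - π b) = 0 := by
    have h := (hz _).mp (hcong (-1) 1)
    rw [hevF] at h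
    rw [map_sub] at h
    push_cast [map_add, map_mul, map_pow, map_sub, map_one, map_neg] at h
    linear_combination h
  have e3 : π α₃ = -(π α₀ * (π a ^ 2 * π b)) := by linear_combination q01
  have e1 : π α₁ = -(π α₀ * (2 * π a + π b)) := by
    have h : π 2 * (π α₁ + π α₀ * (2 * π a + π b)) = 0 := by
      have h2' : π (2 : 𝓞 K) = (2 : 𝓞 K ⧸ I) := map_ofNat π 2
      rw [h2']
      linear_combination q11 + qm1 - 2 * q01
    rcases mul_eq_zero.mp h with h' | h'
    · exact absurd h' h2R
    · linear_combination h'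
  have e2 : π α₂ = π α₀ * (π a ^ 2 + 2 * π a * π b) := by
    have h : π 2 * (π α₂ - π α₀ * (π a ^ 2 + 2 * π a * π b)) = 0 := by
      have h2' : π (2 : 𝓞 K) = (2 : 𝓞 K ⧸ I) := map_ofNat π 2
      rw [h2']
      linear_combination q11 - qm1 - 2 * q01 + 2 * e3
    rcases mul_eq_zero.mp h with h' | h'
    · exact absurd h' h2R
    · linear_combination h'
  -- Hessian value mod 𝔮
  have key : π 2 * (π 2 * π (eval ![x₀, y₀] H)) =
      -(π 2 * π 2 * (π α₀ ^ 2 * (π a - π b) ^ 2 * (π x₀ - π a * π y₀) ^ 2)) := by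
    have h := congrArg π hev
    push_cast [map_add, map_mul, map_pow, map_sub, map_ofNat] at h
    have h2' : π (2 : 𝓞 K) = (2 : 𝓞 K ⧸ I) := map_ofNat π 2
    rw [h2']
    rw [e1, e2, e3] at h
    linear_combination h
  have hHne : π (eval ![x₀, y₀] H) ≠ 0 := by
    intro h0
    rw [h0, mul_zero, mul_zero] at key
    have : π 2 * π 2 * (π α₀ ^ 2 * (π a - π b) ^ 2 * (π x₀ - π a * π y₀) ^ 2) ≠ 0 := by
      apply mul_ne_zero (mul_ne_zero h2R h2R)
      exact mul_ne_zero (mul_ne_zero (pow_ne_zero _ hA0) (pow_ne_zero _ hAB))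
        (pow_ne_zero _ hX)
    exact this (neg_eq_zero.mp key.symm)
  have hHmem : eval ![x₀, y₀] H ∉ I := fun hm => hHne ((hz _).mp hm)
  have hval : 𝔮.valuation K j = (Multiplicative.ofAdd (1 : ℤ) : Multiplicative ℤ) := by
    have hone : ∀ x : 𝓞 K, x ∉ I → 𝔮.intValuation x = 1 := by
      intro x hx
      have hle := 𝔮.intValuation_le_one x
      rcases lt_or_eq_of_le hle with hlt | heq
      · exfalso
        have hdvd := (𝔮.intValuation_lt_one_iff_dvd x).mp hlt
        rw [Ideal.dvd_span_singleton] at hdvd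
        exact hx hdvd
      · exact heq
    have hFne : eval ![x₀, y₀] F ∉ I := by
      rw [hsol]; intro hm; exact hz₀ (hqp.mem_of_pow_mem l hm)
    have h2n : (2 : 𝓞 K) ∉ I := h2
    have hnum : 𝔮.intValuation (-2 ^ 8 * eval ![x₀, y₀] H ^ 3) = 1 := by
      rw [map_mul, Valuation.map_neg, map_pow, map_pow, hone 2 h2n,
        hone _ hHmem, one_pow, one_pow, one_mul]
    have hden : 𝔮.intValuation (Δ * eval ![x₀, y₀] F ^ 2) =
        (Multiplicative.ofAdd (-1 : ℤ) : Multiplicative ℤ) := by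
      rw [map_mul, map_pow, hΔ𝔮, hone _ hFne, one_pow, mul_one]
    rw [hj, map_div₀, 𝔮.valuation_of_algebraMap, 𝔮.valuation_of_algebraMap, hnum, hden]
    rw [one_div, ← WithZero.coe_inv, WithZero.coe_inj]
    rfl
  refine ⟨hHmem, hval, ?_⟩
  rw [hval]
  have h1 : (1 : Multiplicative ℤ) < Multiplicative.ofAdd (1 : ℤ) := by
    rw [← ofAdd_zero]
    exact Multiplicative.ofAdd_lt.mpr one_pos
  simpa using WithZero.coe_lt_coe.mpr h1
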